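/- arXiv:2402.04842 — 2 statements merged into one kernel-verified Lean document; each statement's English description precedes it below -/
import Mathlib

section
/- Let Ω be an admissible probability space with flow (θ_z)_{z∈ℝ^d}. Then the extended metric d on Ω×ℝ^d is lower semicontinuous on (Ω×ℝ^d)×(Ω×ℝ^d) with respect to the product topology; that is, if (ω_n,z_n)→(ω,z) and (ω'_n,z'_n)→(ω',z') in Ω×ℝ^d, then d((ω,z),(ω',z')) ≤ liminf_{n→∞} d((ω_n,z_n),(ω'_n,z'_n)). -/
open MeasureTheory ProbabilityTheory Filter Topology Set
open scoped ENNReal RealInnerProductSpace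

noncomputable section

abbrev Ed (d : ℕ) : Type := EuclideanSpace ℝ (Fin d)

/-- An admissible probability space: metrizable `Ω` with a jointly measurable and jointly
continuous flow `θ` of `ℝ^d` under which the probability measure `Q` is stationary. -/
structure AdmissibleFlow (Ω : Type*) [TopologicalSpace Ω] [MeasurableSpace Ω]
    (d : ℕ) (θ : Ed d → Ω → Ω) (Q : Measure Ω) : Prop where
  metrizable : TopologicalSpace.MetrizableSpace Ω
  prob : IsProbabilityMeasure Q
  flow_zero : ∀ ω, θ 0 ω = ω
  flow_comp : ∀ (x z : Ed d) (ω : Ω), θ z (θ x ω) = θ (x + z) ω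
  flow_meas : Measurable fun p : Ω × Ed d => θ p.2 p.1
  flow_cont : Continuous fun p : Ω × Ed d => θ p.2 p.1
  stationary : ∀ z : Ed d, Q.map (θ z) = Q

variable {d : ℕ} {Ω : Type*}

/-- `d_Ω(ω₁,ω₂) = inf {‖z‖ : θ_z ω₁ = ω₂}` (`= ∞` if no such `z`). -/
def dOmega (θ : Ed d → Ω → Ω) (ω₁ ω₂ : Ω) : ℝ≥0∞ :=
  ⨅ (z : Ed d) (_ : θ z ω₁ = ω₂), ENNReal.ofReal ‖z‖

/-- `d((ω₁,z₁),(ω₂,z₂)) = (‖z₁ - z₂‖² + d_Ω(ω₁,ω₂)²)^{1/2}`. -/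
def dProd (θ : Ed d → Ω → Ω) (p q : Ω × Ed d) : ℝ≥0∞ :=
  (ENNReal.ofReal ‖p.2 - q.2‖ ^ 2 + dOmega θ p.1 q.1 ^ 2) ^ (1 / 2 : ℝ)

/-- The unit cube `Λ₁ = [-1/2,1/2]^d`. -/
def cube (d : ℕ) : Set (Ed d) := {x : Ed d | ∀ i, x i ∈ Icc (-(1 / 2) : ℝ) (1 / 2)}

/-- A random measure (kernel) is equivariant if `ξ(ω,B) = ξ(θ_z ω, B - z)`. -/
def EquivariantRM (θ : Ed d → Ω → Ω) [MeasurableSpace Ω] (ξ : Kernel Ω (Ed d)) : Prop :=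
  ∀ (ω : Ω) (z : Ed d) (B : Set (Ed d)), MeasurableSet B →
    ξ ω B = ξ (θ z ω) ((· + z) ⁻¹' B)

/-- A random measure is `Q`-a.s. locally finite. -/
def LocFiniteRM [MeasurableSpace Ω] (Q : Measure Ω) (ξ : Kernel Ω (Ed d)) : Prop :=
  ∀ᵐ ω ∂Q, ∀ B : Set (Ed d), Bornology.IsBounded B → ξ ω B < ⊤

/-- `Qξ` is the Palm measure of `ξ` (w.r.t. `Q` and the flow `θ`):
`Qξ(A) = ∫∫_{Λ₁} 1_A(θ_z ω) ξ(ω,dz) Q(dω)`. -/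
def IsPalm (θ : Ed d → Ω → Ω) [MeasurableSpace Ω] (Q : Measure Ω)
    (ξ : Kernel Ω (Ed d)) (Qξ : Measure Ω) : Prop :=
  ∀ A : Set Ω, MeasurableSet A →
    Qξ A = ∫⁻ ω, ∫⁻ z in cube d, A.indicator (fun _ => (1 : ℝ≥0∞)) (θ z ω) ∂(ξ ω) ∂Q

/-- The intensity of a random measure. -/
def intensityRM [MeasurableSpace Ω] (Q : Measure Ω) (ξ : Kernel Ω (Ed d)) : ℝ≥0∞ :=
  ∫⁻ ω, ξ ω (cube d) ∂Q


private lemma sqrt_le_of_sq {x b : ℝ≥0∞} (hx : x ^ (1 / 2 : ℝ) ≤ b) : x ≤ b ^ 2 := by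
  have h2 := ENNReal.rpow_le_rpow hx (by norm_num : (0:ℝ) ≤ 2)
  rwa [← ENNReal.rpow_mul, show (1/2:ℝ) * 2 = 1 by norm_num, ENNReal.rpow_one,
    show (2:ℝ) = ((2:ℕ):ℝ) by norm_num, ENNReal.rpow_natCast] at h2

private lemma le_sqrt_of_sq {x b : ℝ≥0∞} (hx : x ^ 2 ≤ b) : x ≤ b ^ (1 / 2 : ℝ) := by
  have h2 := ENNReal.rpow_le_rpow hx (by norm_num : (0:ℝ) ≤ 1 / 2)
  rwa [← ENNReal.rpow_natCast x 2, ← ENNReal.rpow_mul,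
    show ((2:ℕ):ℝ) * (1/2) = 1 by norm_num, ENNReal.rpow_one] at h2

/-- The extended metric `d` on `Ω × ℝ^d` is lower semicontinuous
w.r.t. the product topology. -/
theorem dProd_lowerSemicontinuous
    [TopologicalSpace Ω] [MeasurableSpace Ω]
    (θ : Ed d → Ω → Ω) (Q : Measure Ω) (adm : AdmissibleFlow Ω d θ Q)
    (ωn ωn' : ℕ → Ω) (zn zn' : ℕ → Ed d) (ω ω' : Ω) (z z' : Ed d)
    (h : Tendsto (fun n => ((ωn n, zn n) : Ω × Ed d)) atTop (𝓝 (ω, z)))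
    (h' : Tendsto (fun n => ((ωn' n, zn' n) : Ω × Ed d)) atTop (𝓝 (ω', z'))) :
    dProd θ (ω, z) (ω', z') ≤
      Filter.liminf (fun n => dProd θ (ωn n, zn n) (ωn' n, zn' n)) atTop := by
  haveI := adm.metrizable
  rw [Filter.le_liminf_iff]
  intro b hb
  by_contra hcon
  rw [Filter.not_eventually] at hcon
  simp only [not_lt] at hcon
  obtain ⟨m, hm_mono, hm⟩ := Filter.extraction_of_frequently_atTop hcon
  have hbne : b ≠ ⊤ := hb.ne_top
  -- component convergences
  have hω1 : Tendsto ωn atTop (𝓝 ω) := (continuous_fst.tendsto _).comp h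
  have hz1 : Tendsto zn atTop (𝓝 z) := (continuous_snd.tendsto _).comp h
  have hω2 : Tendsto ωn' atTop (𝓝 ω') := (continuous_fst.tendsto _).comp h'
  have hz2 : Tendsto zn' atTop (𝓝 z') := (continuous_snd.tendsto _).comp h'
  -- key squared inequality along the subsequence
  have key : ∀ k, ENNReal.ofReal ‖zn (m k) - zn' (m k)‖ ^ 2
      + dOmega θ (ωn (m k)) (ωn' (m k)) ^ 2 ≤ b ^ 2 := fun k => sqrt_le_of_sq (hm k)
  have hdom_le : ∀ k, dOmega θ (ωn (m k)) (ωn' (m k)) ≤ b := by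
    intro k
    have h1 : dOmega θ (ωn (m k)) (ωn' (m k)) ^ 2 ≤ b ^ 2 :=
      le_trans (le_add_self) (key k)
    have := le_sqrt_of_sq h1
    calc dOmega θ (ωn (m k)) (ωn' (m k))
        ≤ (b ^ 2) ^ (1 / 2 : ℝ) := this
      _ = b := by
          rw [← ENNReal.rpow_natCast b 2, ← ENNReal.rpow_mul,
            show ((2:ℕ):ℝ) * (1/2) = 1 by norm_num, ENNReal.rpow_one]
  -- pick almost-minimizing shifts
  have hchoice : ∀ k : ℕ, ∃ v : Ed d, θ v (ωn (m k)) = ωn' (m k) ∧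
      ENNReal.ofReal ‖v‖ < dOmega θ (ωn (m k)) (ωn' (m k)) + ENNReal.ofReal (1 / (k + 1)) := by
    intro k
    have hlt : dOmega θ (ωn (m k)) (ωn' (m k)) <
        dOmega θ (ωn (m k)) (ωn' (m k)) + ENNReal.ofReal (1 / (k + 1)) := by
      refine ENNReal.lt_add_right ((hdom_le k).trans_lt hbne.lt_top).ne ?_
      simp [ENNReal.ofReal_eq_zero]
      positivity
    have := hlt
    rw [dOmega] at this
    obtain ⟨v, hv⟩ := iInf_lt_iff.mp this
    obtain ⟨hvθ, hvn⟩ := iInf_lt_iff.mp hv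
    exact ⟨v, hvθ, hvn⟩
  choose v hvθ hvn using hchoice
  -- the shifts are bounded
  have hvball : ∀ k, v k ∈ Metric.closedBall (0 : Ed d) (b + 1).toReal := by
    intro k
    have h1 : ENNReal.ofReal ‖v k‖ ≤ b + 1 := by
      refine le_trans (hvn k).le (add_le_add (hdom_le k) ?_)
      refine ENNReal.ofReal_le_one.mpr ?_
      rw [div_le_one (by positivity)]
      simp
    rw [Metric.mem_closedBall, dist_zero_right]
    have := (ENNReal.ofReal_le_iff_le_toReal (by simp [hbne])).mp h1
    simpa using this
  obtain ⟨w, -, φ, hφ_mono, hw⟩ :=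
    (isCompact_closedBall (0 : Ed d) (b + 1).toReal).tendsto_subseq hvball
  -- limits along the sub-subsequence
  have hmφ : Tendsto (fun j => m (φ j)) atTop atTop :=
    (hm_mono.comp hφ_mono).tendsto_atTop
  have hω1' : Tendsto (fun j => ωn (m (φ j))) atTop (𝓝 ω) := hω1.comp hmφ
  have hω2' : Tendsto (fun j => ωn' (m (φ j))) atTop (𝓝 ω') := hω2.comp hmφ
  -- θ w ω = ω'
  have hθw : θ w ω = ω' := by
    have hpair : Tendsto (fun j => ((ωn (m (φ j)), v (φ j)) : Ω × Ed d)) atTop (𝓝 (ω, w)) :=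
      hω1'.prodMk_nhds hw
    have hcomp : Tendsto (fun j => θ (v (φ j)) (ωn (m (φ j)))) atTop (𝓝 (θ w ω)) :=
      (adm.flow_cont.tendsto (ω, w)).comp hpair
    have hcomp' : Tendsto (fun j => θ (v (φ j)) (ωn (m (φ j)))) atTop (𝓝 ω') := by
      simp only [hvθ]; exact hω2'
    exact tendsto_nhds_unique hcomp hcomp'
  have hdω : dOmega θ ω ω' ≤ ENNReal.ofReal ‖w‖ := by
    rw [dOmega]; exact iInf₂_le w hθw
  -- pass to the limit in the squared inequality
  have hz1' : Tendsto (fun j => zn (m (φ j))) atTop (𝓝 z) := hz1.comp hmφ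
  have hz2' : Tendsto (fun j => zn' (m (φ j))) atTop (𝓝 z') := hz2.comp hmφ
  have hA : Tendsto (fun j => ENNReal.ofReal ‖zn (m (φ j)) - zn' (m (φ j))‖ ^ 2) atTop
      (𝓝 (ENNReal.ofReal ‖z - z'‖ ^ 2)) := by
    have h1 : Tendsto (fun j => ‖zn (m (φ j)) - zn' (m (φ j))‖) atTop (𝓝 ‖z - z'‖) :=
      ((hz1'.sub hz2').norm)
    exact ((ENNReal.continuous_pow 2).tendsto _).comp
      ((ENNReal.continuous_ofReal.tendsto _).comp h1)
  have hε : Tendsto (fun j => ENNReal.ofReal (1 / ((φ j : ℝ) + 1))) atTop (𝓝 0) := by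
    have h1 : Tendsto (fun j => 1 / ((φ j : ℝ) + 1)) atTop (𝓝 0) :=
      tendsto_one_div_add_atTop_nhds_zero_nat.comp hφ_mono.tendsto_atTop
    simpa [Function.comp_def] using (ENNReal.continuous_ofReal.tendsto 0).comp h1
  have hV : Tendsto (fun j => ENNReal.ofReal ‖v (φ j)‖) atTop (𝓝 (ENNReal.ofReal ‖w‖)) :=
    (ENNReal.continuous_ofReal.tendsto _).comp hw.norm
  have hVs : Tendsto (fun j => ENNReal.ofReal ‖v (φ j)‖ - ENNReal.ofReal (1 / ((φ j : ℝ) + 1)))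
      atTop (𝓝 (ENNReal.ofReal ‖w‖)) := by
    have := ENNReal.Tendsto.sub hV hε (Or.inl ENNReal.ofReal_ne_top)
    simpa using this
  have hLHS : Tendsto (fun j => ENNReal.ofReal ‖zn (m (φ j)) - zn' (m (φ j))‖ ^ 2 +
      (ENNReal.ofReal ‖v (φ j)‖ - ENNReal.ofReal (1 / ((φ j : ℝ) + 1))) ^ 2) atTop
      (𝓝 (ENNReal.ofReal ‖z - z'‖ ^ 2 + ENNReal.ofReal ‖w‖ ^ 2)) :=
    hA.add (((ENNReal.continuous_pow 2).tendsto _).comp hVs)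
  have hbound : ∀ j, ENNReal.ofReal ‖zn (m (φ j)) - zn' (m (φ j))‖ ^ 2 +
      (ENNReal.ofReal ‖v (φ j)‖ - ENNReal.ofReal (1 / ((φ j : ℝ) + 1))) ^ 2 ≤ b ^ 2 := by
    intro j
    refine le_trans ?_ (key (φ j))
    refine add_le_add le_rfl (pow_le_pow_left₀ zero_le ?_ 2)
    exact tsub_le_iff_right.mpr (hvn (φ j)).le
  have hlim : ENNReal.ofReal ‖z - z'‖ ^ 2 + ENNReal.ofReal ‖w‖ ^ 2 ≤ b ^ 2 :=
    le_of_tendsto hLHS (Filter.Eventually.of_forall hbound)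
  -- conclude
  have htarget : dProd θ (ω, z) (ω', z') ≤ b := by
    have h1 : dProd θ (ω, z) (ω', z') ≤
        (ENNReal.ofReal ‖z - z'‖ ^ 2 + ENNReal.ofReal ‖w‖ ^ 2) ^ (1 / 2 : ℝ) := by
      rw [dProd]
      exact ENNReal.rpow_le_rpow (add_le_add le_rfl (pow_le_pow_left₀ zero_le hdω 2))
        (by norm_num)
    refine h1.trans ?_
    calc (ENNReal.ofReal ‖z - z'‖ ^ 2 + ENNReal.ofReal ‖w‖ ^ 2) ^ (1 / 2 : ℝ)
        ≤ (b ^ 2) ^ (1 / 2 : ℝ) := ENNReal.rpow_le_rpow hlim (by norm_num)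
      _ = b := by
          rw [← ENNReal.rpow_natCast b 2, ← ENNReal.rpow_mul,
            show ((2:ℕ):ℝ) * (1/2) = 1 by norm_num, ENNReal.rpow_one]
  exact absurd hb (not_lt.mpr htarget)

end
end

section
/- Let Ω be an admissible probability space with flow (θ_z)_{z∈ℝ^d} and let f:Ω×ℝ^d→ℝ be continuous (for the product topology) and bounded. For ε>0 let ρ_ε(z,u)=(2πε)^{-d}exp(−‖(z,u)‖²/(2ε)) and f_ε(ω,x)=∫_{ℝ^d}∫_{ℝ^d} ρ_ε(z,u) f(θ_zω, x−u) dz du. Then for all r,v∈ℝ^d, f_ε(θ_rω, x+v)=∫∫ ρ_ε(z−r, u+v) f(θ_zω, x−u) dz du; the gradients ∇_Ω f_ε(ω,x) and ∇_{ℝ^d} f_ε(ω,x) exist and satisfy (−∇_Ω f_ε(ω,x), ∇_{ℝ^d} f_ε(ω,x)) = ∫∫ ∇ρ_ε(z,u) f(θ_zω, x−u) dz du; and the resulting gradient of f_ε is uniformly bounded on Ω×ℝ^d and continuous with respect to the metric d. -/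
open MeasureTheory ProbabilityTheory Filter Topology Set
open scoped ENNReal RealInnerProductSpace BoundedContinuousFunction

noncomputable section

variable {d : ℕ} {Ω : Type*}

/-- `g` is the gradient of `Φ` at `ω` along the flow `θ`: for every curve `c` with
`c 0 = 0` differentiable at `0`, `d/dt|₀ Φ(θ_{c(t)} ω) = ⟪c'(0), g⟫`. -/
def HasGradOmega (θ : Ed d → Ω → Ω) (Φ : Ω → ℝ) (ω : Ω) (g : Ed d) : Prop :=
  ∀ (c : ℝ → Ed d) (v : Ed d), c 0 = 0 → HasDerivAt c v 0 →
    HasDerivAt (fun t => Φ (θ (c t) ω)) ⟪v, g⟫ 0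

/-- Continuity of a map on `Ω × ℝ^d` with respect to the extended metric `d`. -/
def ContWrtD {α : Type*} [PseudoMetricSpace α] (θ : Ed d → Ω → Ω) (g : Ω × Ed d → α) : Prop :=
  ∀ (p : Ω × Ed d) (ε : ℝ), 0 < ε → ∃ δ : ℝ, 0 < δ ∧
    ∀ q : Ω × Ed d, dProd θ p q < ENNReal.ofReal δ → dist (g q) (g p) < ε

/-- The Gaussian mollifier `ρ_ε(z,u) = (2πε)^{-d} exp(-‖(z,u)‖²/(2ε))`. -/
def rho (d : ℕ) (ε : ℝ) (z u : Ed d) : ℝ :=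
  (2 * Real.pi * ε) ^ (-(d : ℝ)) * Real.exp (-(‖z‖ ^ 2 + ‖u‖ ^ 2) / (2 * ε))

/-- The mollification `f_ε(ω,x) = ∫∫ ρ_ε(z,u) f(θ_z ω, x - u) dz du`. -/
def feps [TopologicalSpace Ω] (θ : Ed d → Ω → Ω) (f : Ω × Ed d → ℝ) (ε : ℝ)
    (ω : Ω) (x : Ed d) : ℝ :=
  ∫ zu : Ed d × Ed d, rho d ε zu.1 zu.2 * f (θ zu.1 ω, x - zu.2)

namespace MollAux

variable {d : ℕ}

lemma integrable_gauss (d : ℕ) {b : ℝ} (hb : 0 < b) :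
    Integrable (fun v : Ed d => Real.exp (-(b * ‖v‖^2))) := by
  have := (GaussianFourier.integrable_cexp_neg_mul_sq_norm_add_of_euclideanSpace (b := (b:ℂ))
    (by simpa using hb) 0 (0 : Ed d)).norm
  have heq : ∀ v : Ed d, ‖Complex.exp (-(b:ℂ) * (‖v‖:ℂ)^2 + 0 * ((inner ℝ (0:Ed d) v : ℝ):ℂ))‖
      = Real.exp (-(b * ‖v‖^2)) := by
    intro v
    have h2 : (-(b:ℂ) * (‖v‖:ℂ)^2 + 0 * ((inner ℝ (0:Ed d) v : ℝ):ℂ)) = ((-(b * ‖v‖^2) : ℝ) : ℂ) := by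
      push_cast; ring
    rw [h2, Complex.norm_exp, Complex.ofReal_re]
  simpa only [heq] using this

lemma integrable_poly_gauss (d : ℕ) {ε : ℝ} (A : ℝ) (hε : 0 < ε) :
    Integrable (fun x : Ed d => (1+‖x‖) * Real.exp (A*‖x‖ - ‖x‖^2/(2*ε))) := by
  have hb : (0:ℝ) < 1/(4*ε) := by positivity
  apply Integrable.mono' ((integrable_gauss d hb).const_mul (Real.exp ((A+1)^2 * ε)))
  · apply Continuous.aestronglyMeasurable
    fun_prop
  · refine Eventually.of_forall fun x => ?_
    set t := ‖x‖ with ht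
    have htn : 0 ≤ t := norm_nonneg x
    have h1 : 1 + t ≤ Real.exp t := by
      simpa [add_comm] using Real.add_one_le_exp t
    have key : (A+1)*t - t^2/(2*ε) ≤ (A+1)^2 * ε + (-(1/(4*ε) * t^2)) := by
      have expand : (A+1)^2*ε + (-(1/(4*ε)*t^2)) - ((A+1)*t - t^2/(2*ε))
          = (2*ε*(A+1) - t)^2 / (4*ε) := by field_simp; ring
      have h0 : 0 ≤ (2*ε*(A+1)-t)^2/(4*ε) := by positivity
      linarith [expand, h0]
    have hnn : 0 ≤ (1+t) * Real.exp (A*t - t^2/(2*ε)) := by positivity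
    rw [Real.norm_of_nonneg hnn]
    calc (1+t) * Real.exp (A*t - t^2/(2*ε))
        ≤ Real.exp t * Real.exp (A*t - t^2/(2*ε)) := by
          apply mul_le_mul_of_nonneg_right h1 (Real.exp_nonneg _)
      _ = Real.exp ((A+1)*t - t^2/(2*ε)) := by rw [← Real.exp_add]; ring_nf
      _ ≤ Real.exp ((A+1)^2 * ε + (-(1/(4*ε) * t^2))) := Real.exp_le_exp.mpr key
      _ = Real.exp ((A+1)^2 * ε) * Real.exp (-(1/(4*ε) * t^2)) := Real.exp_add _ _

/-- The master integrable bound. -/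
def bnd (d : ℕ) (ε M : ℝ) (p : Ed d × Ed d) : ℝ :=
  ((1+‖p.1‖) * Real.exp ((M/ε)*‖p.1‖ - ‖p.1‖^2/(2*ε))) *
    ((1+‖p.2‖) * Real.exp ((M/ε)*‖p.2‖ - ‖p.2‖^2/(2*ε)))

lemma integrable_bnd {ε : ℝ} (hε : 0 < ε) (M : ℝ) : Integrable (bnd d ε M) := by
  unfold bnd
  rw [Measure.volume_eq_prod]
  exact (integrable_poly_gauss d (M/ε) hε).mul_prod (integrable_poly_gauss d (M/ε) hε)

lemma bnd_nonneg {ε M : ℝ} (p : Ed d × Ed d) : 0 ≤ bnd d ε M p := by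
  unfold bnd; positivity

lemma rho_nonneg {ε : ℝ} (hε : 0 < ε) (z u : Ed d) : 0 ≤ rho d ε z u := by
  unfold rho
  have : (0:ℝ) < 2 * Real.pi * ε := by positivity
  positivity

/-- Scalar version of the key shift bound. -/
lemma shift_bound_scalar {c ε M a b s t : ℝ} (hc : 0 < c) (hε : 0 < ε) (hM : 0 ≤ M)
    (han : 0 ≤ a) (hbn : 0 ≤ b) (hsn : 0 ≤ s) (htn : 0 ≤ t)
    (hsa : s ≤ a + M) (htb : t ≤ b + M) (has : a ≤ s + M) (hbt : b ≤ t + M) :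
    c * Real.exp (-(a^2+b^2)/(2*ε)) * (a + b + 1) ≤
      c * (1+2*M) * (((1+s) * Real.exp ((M/ε)*s - s^2/(2*ε))) *
        ((1+t) * Real.exp ((M/ε)*t - t^2/(2*ε)))) := by
  have ha2 : s^2 - 2*M*s ≤ a^2 := by
    rcases le_or_gt M s with h|h
    · have h1 : s - M ≤ a := by linarith
      have h2 := mul_self_le_mul_self (by linarith : (0:ℝ) ≤ s - M) h1
      nlinarith
    · have h2 : s*s ≤ M*s := mul_le_mul_of_nonneg_right (le_of_lt h) hsn
      nlinarith [sq_nonneg a]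
  have hb2 : t^2 - 2*M*t ≤ b^2 := by
    rcases le_or_gt M t with h|h
    · have h1 : t - M ≤ b := by linarith
      have h2 := mul_self_le_mul_self (by linarith : (0:ℝ) ≤ t - M) h1
      nlinarith
    · have h2 : t*t ≤ M*t := mul_le_mul_of_nonneg_right (le_of_lt h) htn
      nlinarith [sq_nonneg b]
  have hE : Real.exp (-(a^2+b^2)/(2*ε)) ≤
      Real.exp ((M/ε)*s - s^2/(2*ε)) * Real.exp ((M/ε)*t - t^2/(2*ε)) := by
    rw [← Real.exp_add]
    apply Real.exp_le_exp.mpr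
    have h1 : (M/ε)*s - s^2/(2*ε) = (2*M*s - s^2)/(2*ε) := by field_simp
    have h2 : (M/ε)*t - t^2/(2*ε) = (2*M*t - t^2)/(2*ε) := by field_simp
    rw [h1, h2, ← add_div, div_le_div_iff₀ (by positivity) (by positivity)]
    nlinarith
  have hfac : a + b + 1 ≤ (1+2*M) * ((1+s)*(1+t)) := by
    nlinarith [mul_nonneg hsn htn, mul_nonneg hM hsn, mul_nonneg hM htn,
      mul_nonneg (mul_nonneg hM hsn) htn]
  calc c * Real.exp (-(a^2+b^2)/(2*ε)) * (a+b+1)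
      ≤ c * (Real.exp ((M/ε)*s - s^2/(2*ε)) * Real.exp ((M/ε)*t - t^2/(2*ε))) *
        ((1+2*M) * ((1+s)*(1+t))) := by
        apply mul_le_mul (mul_le_mul_of_nonneg_left hE (le_of_lt hc)) hfac (by positivity)
          (by positivity)
    _ = c * (1+2*M) * (((1+s) * Real.exp ((M/ε)*s - s^2/(2*ε))) *
        ((1+t) * Real.exp ((M/ε)*t - t^2/(2*ε)))) := by ring

/-- The key shift bound. -/
lemma rho_shift_bound {ε : ℝ} (hε : 0 < ε) {M : ℝ} (hM : 0 ≤ M) {q : Ed d × Ed d}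
    (hq1 : ‖q.1‖ ≤ M) (hq2 : ‖q.2‖ ≤ M) (p : Ed d × Ed d) :
    rho d ε (p.1-q.1) (p.2-q.2) * (‖p.1-q.1‖ + ‖p.2-q.2‖ + 1) ≤
      (2*Real.pi*ε) ^ (-(d:ℝ)) * (1+2*M) * bnd d ε M p := by
  have hc : (0:ℝ) < (2*Real.pi*ε) ^ (-(d:ℝ)) :=
    Real.rpow_pos_of_pos (by positivity) _
  have hsa : ‖p.1‖ ≤ ‖p.1 - q.1‖ + M := by
    calc ‖p.1‖ = ‖(p.1 - q.1) + q.1‖ := by rw [sub_add_cancel]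
    _ ≤ ‖p.1 - q.1‖ + ‖q.1‖ := norm_add_le _ _
    _ ≤ ‖p.1 - q.1‖ + M := by linarith
  have htb : ‖p.2‖ ≤ ‖p.2 - q.2‖ + M := by
    calc ‖p.2‖ = ‖(p.2 - q.2) + q.2‖ := by rw [sub_add_cancel]
    _ ≤ ‖p.2 - q.2‖ + ‖q.2‖ := norm_add_le _ _
    _ ≤ ‖p.2 - q.2‖ + M := by linarith
  have has : ‖p.1 - q.1‖ ≤ ‖p.1‖ + M := le_trans (norm_sub_le _ _) (by linarith)
  have hbt : ‖p.2 - q.2‖ ≤ ‖p.2‖ + M := le_trans (norm_sub_le _ _) (by linarith)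
  exact shift_bound_scalar hc hε hM (norm_nonneg _) (norm_nonneg _) (norm_nonneg _)
    (norm_nonneg _) hsa htb has hbt



/-- The linear functional `h ↦ ⟪p.1,h.1⟫ + ⟪p.2,h.2⟫`. -/
def MB (p : Ed d × Ed d) : (Ed d × Ed d) →L[ℝ] ℝ :=
  (innerSL ℝ p.1).comp (ContinuousLinearMap.fst ℝ (Ed d) (Ed d)) +
    (innerSL ℝ p.2).comp (ContinuousLinearMap.snd ℝ (Ed d) (Ed d))

lemma MB_apply (p h : Ed d × Ed d) : MB p h = ⟪p.1, h.1⟫ + ⟪p.2, h.2⟫ := rfl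

lemma continuous_MB : Continuous (MB (d := d)) := by
  apply Continuous.add
  · exact ((innerSL ℝ).continuous.comp continuous_fst).clm_comp continuous_const
  · exact ((innerSL ℝ).continuous.comp continuous_snd).clm_comp continuous_const

lemma norm_MB_le (p : Ed d × Ed d) : ‖MB p‖ ≤ ‖p.1‖ + ‖p.2‖ := by
  apply ContinuousLinearMap.opNorm_le_bound _ (by positivity)
  intro h
  rw [MB_apply]
  calc |⟪p.1, h.1⟫ + ⟪p.2, h.2⟫| ≤ |⟪p.1, h.1⟫| + |⟪p.2, h.2⟫| := abs_add_le _ _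
    _ ≤ ‖p.1‖ * ‖h.1‖ + ‖p.2‖ * ‖h.2‖ :=
        add_le_add (abs_real_inner_le_norm _ _) (abs_real_inner_le_norm _ _)
    _ ≤ ‖p.1‖ * ‖h‖ + ‖p.2‖ * ‖h‖ := by
        gcongr
        · exact norm_fst_le h
        · exact norm_snd_le h
    _ = (‖p.1‖ + ‖p.2‖) * ‖h‖ := by ring

lemma continuous_rho2 (ε : ℝ) : Continuous fun p : Ed d × Ed d => rho d ε p.1 p.2 := by
  unfold rho
  fun_prop

lemma hasFDerivAt_rho2 {ε : ℝ} (hε : 0 < ε) (p : Ed d × Ed d) :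
    HasFDerivAt (fun q : Ed d × Ed d => rho d ε q.1 q.2)
      ((-(rho d ε p.1 p.2)/ε) • MB p) p := by
  have h1 := (hasFDerivAt_fst (p := p)).norm_sq
  have h2 := (hasFDerivAt_snd (p := p)).norm_sq
  have h3 := ((h1.add h2).const_mul (-(1/(2*ε)))).exp.const_mul
    ((2 * Real.pi * ε) ^ (-(d : ℝ)))
  have heq : (fun q : Ed d × Ed d =>
      (2 * Real.pi * ε) ^ (-(d : ℝ)) * Real.exp (-(1/(2*ε)) * (‖q.1‖^2 + ‖q.2‖^2)))
      = fun q : Ed d × Ed d => rho d ε q.1 q.2 := by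
    funext q
    unfold rho
    congr 1
    congr 1
    field_simp
  simp only [Pi.add_apply] at h3
  rw [heq] at h3
  have hexp : Real.exp (-(1/(2*ε)) * (‖p.1‖^2 + ‖p.2‖^2))
      = Real.exp (-(‖p.1‖ ^ 2 + ‖p.2‖ ^ 2) / (2 * ε)) := by congr 1; field_simp
  have hD : ((2 * Real.pi * ε) ^ (-(d:ℝ)) •
      Real.exp (-(1 / (2 * ε)) * (‖p.1‖ ^ 2 + ‖p.2‖ ^ 2)) •
        (-(1 / (2 * ε))) •
          ((2:ℕ) • (innerSL ℝ p.1).comp (ContinuousLinearMap.fst ℝ (Ed d) (Ed d)) +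
            (2:ℕ) • (innerSL ℝ p.2).comp (ContinuousLinearMap.snd ℝ (Ed d) (Ed d))))
      = ((-(rho d ε p.1 p.2)/ε) • MB p) := by
    ext h
    · simp only [ContinuousLinearMap.smul_apply, ContinuousLinearMap.add_apply,
        ContinuousLinearMap.coe_comp', Function.comp_apply, ContinuousLinearMap.coe_fst',
        ContinuousLinearMap.coe_snd', MB_apply, smul_eq_mul, rho, hexp,
        ContinuousLinearMap.coe_smul', Pi.smul_apply, nsmul_eq_mul, Nat.cast_ofNat,
        innerSL_apply_apply, ContinuousLinearMap.inl_apply, inner_zero_right, neg_div]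
      ring
    · simp only [ContinuousLinearMap.smul_apply, ContinuousLinearMap.add_apply,
        ContinuousLinearMap.coe_comp', Function.comp_apply, ContinuousLinearMap.coe_fst',
        ContinuousLinearMap.coe_snd', MB_apply, smul_eq_mul, rho, hexp,
        ContinuousLinearMap.coe_smul', Pi.smul_apply, nsmul_eq_mul, Nat.cast_ofNat,
        innerSL_apply_apply, ContinuousLinearMap.inr_apply, inner_zero_right, neg_div]
      ring
  exact hD ▸ h3

lemma norm_rho2_deriv_le {ε : ℝ} (hε : 0 < ε) (p : Ed d × Ed d) :
    ‖(-(rho d ε p.1 p.2)/ε) • MB p‖ ≤ (rho d ε p.1 p.2 / ε) * (‖p.1‖ + ‖p.2‖) := by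
  have hr : 0 ≤ rho d ε p.1 p.2 := by
    unfold rho
    have : (0:ℝ) < 2 * Real.pi * ε := by positivity
    positivity
  rw [norm_smul ((-(rho d ε p.1 p.2))/ε) (MB p)]
  have h2 : ‖(-(rho d ε p.1 p.2)/ε)‖ = rho d ε p.1 p.2 / ε := by
    rw [Real.norm_eq_abs, abs_div, abs_neg, abs_of_nonneg hr, abs_of_pos hε]
  rw [h2]
  exact mul_le_mul_of_nonneg_left (norm_MB_le p) (by positivity)

/-- Gradient of `rho` in the first variable. -/
lemma gradient_rho_left {ε : ℝ} (hε : 0 < ε) (u z₀ : Ed d) :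
    gradient (fun z => rho d ε z u) z₀ = (-(rho d ε z₀ u)/ε) • z₀ := by
  have hcurve : HasFDerivAt (fun z : Ed d => ((z, u) : Ed d × Ed d))
      ((ContinuousLinearMap.id ℝ (Ed d)).prod 0) z₀ :=
    (hasFDerivAt_id z₀).prodMk (hasFDerivAt_const u z₀)
  have h := (hasFDerivAt_rho2 hε (z₀, u)).comp z₀ hcurve
  have hD : (((-(rho d ε z₀ u)/ε) • MB ((z₀, u) : Ed d × Ed d)).comp
      ((ContinuousLinearMap.id ℝ (Ed d)).prod 0))
      = InnerProductSpace.toDual ℝ (Ed d) ((-(rho d ε z₀ u)/ε) • z₀) := by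
    ext w
    simp only [InnerProductSpace.toDual_apply_apply, ContinuousLinearMap.coe_comp',
      Function.comp_apply, ContinuousLinearMap.prod_apply, ContinuousLinearMap.coe_id', id_eq,
      ContinuousLinearMap.zero_apply, ContinuousLinearMap.smul_apply, MB_apply, smul_eq_mul,
      real_inner_smul_left, inner_zero_right]
    ring
  have hgrad : HasGradientAt (fun z => rho d ε z u) ((-(rho d ε z₀ u)/ε) • z₀) z₀ :=
    hasGradientAt_iff_hasFDerivAt.mpr (hD ▸ h)
  exact hgrad.gradient

/-- Gradient of `rho` in the second variable. -/
lemma gradient_rho_right {ε : ℝ} (hε : 0 < ε) (z u₀ : Ed d) :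
    gradient (fun u => rho d ε z u) u₀ = (-(rho d ε z u₀)/ε) • u₀ := by
  have hcurve : HasFDerivAt (fun u : Ed d => ((z, u) : Ed d × Ed d))
      ((0 : Ed d →L[ℝ] Ed d).prod (ContinuousLinearMap.id ℝ (Ed d))) u₀ :=
    (hasFDerivAt_const z u₀).prodMk (hasFDerivAt_id u₀)
  have h := (hasFDerivAt_rho2 hε (z, u₀)).comp u₀ hcurve
  have hD : (((-(rho d ε z u₀)/ε) • MB ((z, u₀) : Ed d × Ed d)).comp
      ((0 : Ed d →L[ℝ] Ed d).prod (ContinuousLinearMap.id ℝ (Ed d))))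
      = InnerProductSpace.toDual ℝ (Ed d) ((-(rho d ε z u₀)/ε) • u₀) := by
    ext w
    simp only [InnerProductSpace.toDual_apply_apply, ContinuousLinearMap.coe_comp',
      Function.comp_apply, ContinuousLinearMap.prod_apply, ContinuousLinearMap.coe_id', id_eq,
      ContinuousLinearMap.zero_apply, ContinuousLinearMap.smul_apply, MB_apply, smul_eq_mul,
      real_inner_smul_left, inner_zero_right]
    ring
  have hgrad : HasGradientAt (fun u => rho d ε z u) ((-(rho d ε z u₀)/ε) • u₀) u₀ :=
    hasGradientAt_iff_hasFDerivAt.mpr (hD ▸ h)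
  exact hgrad.gradient



def addRE (r : Ed d) : Ed d ≃ᵐ Ed d := MeasurableEquiv.addRight r
def subLE (a : Ed d) : Ed d ≃ᵐ Ed d := (MeasurableEquiv.neg (Ed d)).trans (MeasurableEquiv.addLeft a)
def reflE (d : ℕ) : Ed d ≃ᵐ Ed d := MeasurableEquiv.refl (Ed d)

lemma addRE_apply (r x : Ed d) : addRE r x = x + r := rfl
lemma subLE_apply (a x : Ed d) : subLE a x = a - x := by
  show a + -x = a - x
  rw [sub_eq_add_neg]
lemma reflE_apply (x : Ed d) : reflE d x = x := rfl

lemma addRE_mp (r : Ed d) : MeasurePreserving (addRE r) volume volume :=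
  measurePreserving_add_right volume r
lemma subLE_mp (a : Ed d) : MeasurePreserving (subLE a) volume volume := by
  have h := (measurePreserving_add_left volume a).comp (Measure.measurePreserving_neg volume)
  exact h
lemma reflE_mp : MeasurePreserving (reflE d) volume volume := MeasurePreserving.id volume

/-- Change of variables by a product of measurable measure-preserving equivalences. -/
lemma integral_comp_prod {B : Type*} [NormedAddCommGroup B] [NormedSpace ℝ B]
    (T₁ T₂ : Ed d ≃ᵐ Ed d) (h₁ : MeasurePreserving T₁ volume volume)
    (h₂ : MeasurePreserving T₂ volume volume) (g : Ed d × Ed d → B) :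
    ∫ p : Ed d × Ed d, g (T₁ p.1, T₂ p.2) = ∫ p : Ed d × Ed d, g p := by
  have hmp : MeasurePreserving (MeasurableEquiv.prodCongr T₁ T₂)
      (volume : Measure (Ed d × Ed d)) volume := by
    rw [Measure.volume_eq_prod]
    exact h₁.prod h₂
  exact hmp.integral_comp' g

section Conv

variable {d : ℕ} {ε : ℝ} {F : Ed d × Ed d → ℝ} {C : ℝ}

/-- The convolution `∫ F(p) ρ_ε(p-q) dp`. -/
def G0 (d : ℕ) (ε : ℝ) (F : Ed d × Ed d → ℝ) (q : Ed d × Ed d) : ℝ :=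
  ∫ p : Ed d × Ed d, F p * rho d ε (p.1 - q.1) (p.2 - q.2)

def G1 (d : ℕ) (ε : ℝ) (F : Ed d × Ed d → ℝ) (q : Ed d × Ed d) : Ed d :=
  ∫ p : Ed d × Ed d, (F p * (rho d ε (p.1 - q.1) (p.2 - q.2) / ε)) • (p.1 - q.1)

def G2 (d : ℕ) (ε : ℝ) (F : Ed d × Ed d → ℝ) (q : Ed d × Ed d) : Ed d :=
  ∫ p : Ed d × Ed d, (F p * (rho d ε (p.1 - q.1) (p.2 - q.2) / ε)) • (p.2 - q.2)

lemma cont_rho_shift (ε : ℝ) (q : Ed d × Ed d) :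
    Continuous fun p : Ed d × Ed d => rho d ε (p.1 - q.1) (p.2 - q.2) := by
  unfold rho
  fun_prop

lemma cont_rho_shift' (ε : ℝ) (p : Ed d × Ed d) :
    Continuous fun q : Ed d × Ed d => rho d ε (p.1 - q.1) (p.2 - q.2) := by
  unfold rho
  fun_prop

lemma norm_q_comp {q q₀ : Ed d × Ed d} (hq : q ∈ Metric.ball q₀ 1) :
    ‖q.1‖ ≤ ‖q₀‖ + 1 ∧ ‖q.2‖ ≤ ‖q₀‖ + 1 := by
  have hd : ‖q - q₀‖ < 1 := by
    rw [← dist_eq_norm]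
    exact Metric.mem_ball.mp hq
  have h : ‖q‖ ≤ ‖q₀‖ + 1 := by
    calc ‖q‖ = ‖q - q₀ + q₀‖ := by rw [sub_add_cancel]
    _ ≤ ‖q - q₀‖ + ‖q₀‖ := norm_add_le _ _
    _ ≤ ‖q₀‖ + 1 := by linarith
  exact ⟨le_trans (norm_fst_le q) h, le_trans (norm_snd_le q) h⟩

/-- Master domination for the vector-valued integrands. -/
lemma dom_vec (hε : 0 < ε) (hFb : ∀ p, |F p| ≤ C) (q₀ : Ed d × Ed d) :
    ∀ q ∈ Metric.ball q₀ 1, ∀ p : Ed d × Ed d,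
      |F p| * (rho d ε (p.1 - q.1) (p.2 - q.2) / ε) *
        (‖p.1 - q.1‖ + ‖p.2 - q.2‖ + 1) ≤
      (C * ((2*Real.pi*ε) ^ (-(d:ℝ)) * (1+2*(‖q₀‖+1))) / ε) * bnd d ε (‖q₀‖+1) p := by
  intro q hq p
  obtain ⟨hq1, hq2⟩ := norm_q_comp hq
  have hM : (0:ℝ) ≤ ‖q₀‖ + 1 := by positivity
  have key := rho_shift_bound hε hM hq1 hq2 p
  have hC : 0 ≤ C := le_trans (abs_nonneg _) (hFb p)
  have hr : 0 ≤ rho d ε (p.1 - q.1) (p.2 - q.2) := rho_nonneg hε _ _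
  have habc : (0:ℝ) ≤ ‖p.1 - q.1‖ + ‖p.2 - q.2‖ + 1 := by positivity
  calc |F p| * (rho d ε (p.1 - q.1) (p.2 - q.2) / ε) * (‖p.1 - q.1‖ + ‖p.2 - q.2‖ + 1)
      ≤ C * (rho d ε (p.1 - q.1) (p.2 - q.2) / ε) * (‖p.1 - q.1‖ + ‖p.2 - q.2‖ + 1) := by
        gcongr
        exact hFb p
    _ = (C/ε) * (rho d ε (p.1 - q.1) (p.2 - q.2) * (‖p.1 - q.1‖ + ‖p.2 - q.2‖ + 1)) := by
        ring
    _ ≤ (C/ε) * ((2*Real.pi*ε) ^ (-(d:ℝ)) * (1+2*(‖q₀‖+1)) * bnd d ε (‖q₀‖+1) p) := by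
        apply mul_le_mul_of_nonneg_left key (by positivity)
    _ = (C * ((2*Real.pi*ε) ^ (-(d:ℝ)) * (1+2*(‖q₀‖+1))) / ε) * bnd d ε (‖q₀‖+1) p := by
        ring

lemma integrable_G1_integrand (hε : 0 < ε) (hFc : Continuous F) (hFb : ∀ p, |F p| ≤ C)
    {q q₀ : Ed d × Ed d} (hq : q ∈ Metric.ball q₀ 1) :
    Integrable (fun p : Ed d × Ed d =>
      (F p * (rho d ε (p.1 - q.1) (p.2 - q.2) / ε)) • (p.1 - q.1)) := by
  apply Integrable.mono'
    (((integrable_bnd hε (‖q₀‖+1)).const_mul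
      (C * ((2*Real.pi*ε) ^ (-(d:ℝ)) * (1+2*(‖q₀‖+1))) / ε)))
  · apply Continuous.aestronglyMeasurable
    exact (hFc.mul ((cont_rho_shift ε q).div_const ε)).smul (continuous_fst.sub continuous_const)
  · refine Eventually.of_forall fun p => ?_
    have hr : 0 ≤ rho d ε (p.1 - q.1) (p.2 - q.2) := rho_nonneg hε _ _
    have h1 : ‖(F p * (rho d ε (p.1 - q.1) (p.2 - q.2) / ε)) • (p.1 - q.1)‖
        ≤ |F p| * (rho d ε (p.1 - q.1) (p.2 - q.2) / ε) * (‖p.1 - q.1‖ + ‖p.2 - q.2‖ + 1) := by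
      rw [norm_smul]
      have : ‖F p * (rho d ε (p.1 - q.1) (p.2 - q.2) / ε)‖
          = |F p| * (rho d ε (p.1 - q.1) (p.2 - q.2) / ε) := by
        rw [Real.norm_eq_abs, abs_mul, abs_div, abs_of_nonneg hr, abs_of_pos hε]
      rw [this]
      have hle : ‖p.1 - q.1‖ ≤ ‖p.1 - q.1‖ + ‖p.2 - q.2‖ + 1 := by
        have := norm_nonneg (p.2 - q.2); linarith
      apply mul_le_mul_of_nonneg_left hle (by positivity)
    exact le_trans h1 (dom_vec hε hFb q₀ q hq p)

lemma integrable_G2_integrand (hε : 0 < ε) (hFc : Continuous F) (hFb : ∀ p, |F p| ≤ C)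
    {q q₀ : Ed d × Ed d} (hq : q ∈ Metric.ball q₀ 1) :
    Integrable (fun p : Ed d × Ed d =>
      (F p * (rho d ε (p.1 - q.1) (p.2 - q.2) / ε)) • (p.2 - q.2)) := by
  apply Integrable.mono'
    (((integrable_bnd hε (‖q₀‖+1)).const_mul
      (C * ((2*Real.pi*ε) ^ (-(d:ℝ)) * (1+2*(‖q₀‖+1))) / ε)))
  · apply Continuous.aestronglyMeasurable
    exact (hFc.mul ((cont_rho_shift ε q).div_const ε)).smul (continuous_snd.sub continuous_const)
  · refine Eventually.of_forall fun p => ?_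
    have hr : 0 ≤ rho d ε (p.1 - q.1) (p.2 - q.2) := rho_nonneg hε _ _
    have h1 : ‖(F p * (rho d ε (p.1 - q.1) (p.2 - q.2) / ε)) • (p.2 - q.2)‖
        ≤ |F p| * (rho d ε (p.1 - q.1) (p.2 - q.2) / ε) * (‖p.1 - q.1‖ + ‖p.2 - q.2‖ + 1) := by
      rw [norm_smul]
      have : ‖F p * (rho d ε (p.1 - q.1) (p.2 - q.2) / ε)‖
          = |F p| * (rho d ε (p.1 - q.1) (p.2 - q.2) / ε) := by
        rw [Real.norm_eq_abs, abs_mul, abs_div, abs_of_nonneg hr, abs_of_pos hε]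
      rw [this]
      have hle : ‖p.2 - q.2‖ ≤ ‖p.1 - q.1‖ + ‖p.2 - q.2‖ + 1 := by
        have := norm_nonneg (p.1 - q.1); linarith
      apply mul_le_mul_of_nonneg_left hle (by positivity)
    exact le_trans h1 (dom_vec hε hFb q₀ q hq p)

/-- Norm bound for the `G1` integrand, uniform over `q` in a ball. -/
lemma dom1 (hε : 0 < ε) (hFb : ∀ p, |F p| ≤ C) {q q₀ : Ed d × Ed d}
    (hq : q ∈ Metric.ball q₀ 1) (p : Ed d × Ed d) :
    ‖(F p * (rho d ε (p.1 - q.1) (p.2 - q.2) / ε)) • (p.1 - q.1)‖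
      ≤ (C * ((2*Real.pi*ε) ^ (-(d:ℝ)) * (1+2*(‖q₀‖+1))) / ε) * bnd d ε (‖q₀‖+1) p := by
  have hr : 0 ≤ rho d ε (p.1 - q.1) (p.2 - q.2) := rho_nonneg hε _ _
  have h1 : ‖(F p * (rho d ε (p.1 - q.1) (p.2 - q.2) / ε)) • (p.1 - q.1)‖
      ≤ |F p| * (rho d ε (p.1 - q.1) (p.2 - q.2) / ε) * (‖p.1 - q.1‖ + ‖p.2 - q.2‖ + 1) := by
    rw [norm_smul]
    have e2 : ‖F p * (rho d ε (p.1 - q.1) (p.2 - q.2) / ε)‖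
        = |F p| * (rho d ε (p.1 - q.1) (p.2 - q.2) / ε) := by
      rw [Real.norm_eq_abs, abs_mul, abs_div, abs_of_nonneg hr, abs_of_pos hε]
    rw [e2]
    have hle : ‖p.1 - q.1‖ ≤ ‖p.1 - q.1‖ + ‖p.2 - q.2‖ + 1 := by
      have := norm_nonneg (p.2 - q.2); linarith
    apply mul_le_mul_of_nonneg_left hle (by positivity)
  exact le_trans h1 (dom_vec hε hFb q₀ q hq p)

/-- Norm bound for the `G2` integrand, uniform over `q` in a ball. -/
lemma dom2 (hε : 0 < ε) (hFb : ∀ p, |F p| ≤ C) {q q₀ : Ed d × Ed d}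
    (hq : q ∈ Metric.ball q₀ 1) (p : Ed d × Ed d) :
    ‖(F p * (rho d ε (p.1 - q.1) (p.2 - q.2) / ε)) • (p.2 - q.2)‖
      ≤ (C * ((2*Real.pi*ε) ^ (-(d:ℝ)) * (1+2*(‖q₀‖+1))) / ε) * bnd d ε (‖q₀‖+1) p := by
  have hr : 0 ≤ rho d ε (p.1 - q.1) (p.2 - q.2) := rho_nonneg hε _ _
  have h1 : ‖(F p * (rho d ε (p.1 - q.1) (p.2 - q.2) / ε)) • (p.2 - q.2)‖
      ≤ |F p| * (rho d ε (p.1 - q.1) (p.2 - q.2) / ε) * (‖p.1 - q.1‖ + ‖p.2 - q.2‖ + 1) := by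
    rw [norm_smul]
    have e2 : ‖F p * (rho d ε (p.1 - q.1) (p.2 - q.2) / ε)‖
        = |F p| * (rho d ε (p.1 - q.1) (p.2 - q.2) / ε) := by
      rw [Real.norm_eq_abs, abs_mul, abs_div, abs_of_nonneg hr, abs_of_pos hε]
    rw [e2]
    have hle : ‖p.2 - q.2‖ ≤ ‖p.1 - q.1‖ + ‖p.2 - q.2‖ + 1 := by
      have := norm_nonneg (p.1 - q.1); linarith
    apply mul_le_mul_of_nonneg_left hle (by positivity)
  exact le_trans h1 (dom_vec hε hFb q₀ q hq p)

/-- Differentiation under the integral sign for `G0`. -/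
theorem hasFDerivAt_G0 (hε : 0 < ε) (hFc : Continuous F) (hFb : ∀ p, |F p| ≤ C)
    (q₀ : Ed d × Ed d) :
    HasFDerivAt (G0 d ε F)
      ((innerSL ℝ (G1 d ε F q₀)).comp (ContinuousLinearMap.fst ℝ (Ed d) (Ed d)) +
        (innerSL ℝ (G2 d ε F q₀)).comp (ContinuousLinearMap.snd ℝ (Ed d) (Ed d))) q₀ := by
  have hC : 0 ≤ C := le_trans (abs_nonneg _) (hFb q₀)
  set KK : ℝ := C * ((2*Real.pi*ε) ^ (-(d:ℝ)) * (1+2*(‖q₀‖+1))) / ε with hKK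
  set FF' : (Ed d × Ed d) → (Ed d × Ed d) → ((Ed d × Ed d) →L[ℝ] ℝ) :=
    fun q p => F p • ((rho d ε (p.1 - q.1) (p.2 - q.2) / ε) • MB (p - q)) with hFF'
  have h_diff : ∀ (p : Ed d × Ed d), ∀ q ∈ Metric.ball q₀ 1,
      HasFDerivAt (fun q : Ed d × Ed d => F p * rho d ε (p.1 - q.1) (p.2 - q.2)) (FF' q p) q := by
    intro p q _
    have hsub : HasFDerivAt (fun q : Ed d × Ed d => p - q)
        (-(ContinuousLinearMap.id ℝ (Ed d × Ed d))) q := by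
      have h := (hasFDerivAt_const (𝕜 := ℝ) p q).sub (hasFDerivAt_id (𝕜 := ℝ) q)
      rw [zero_sub] at h; exact h
    have hr := (hasFDerivAt_rho2 hε (p - q)).comp q hsub
    have hD : ((-(rho d ε (p - q).1 (p - q).2)/ε) • MB (p - q)).comp
        (-(ContinuousLinearMap.id ℝ (Ed d × Ed d)))
        = (rho d ε (p.1 - q.1) (p.2 - q.2) / ε) • MB (p - q) := by
      ext h <;>
      · simp only [ContinuousLinearMap.coe_comp', Function.comp_apply,
          ContinuousLinearMap.neg_apply, ContinuousLinearMap.coe_id', id_eq, map_neg,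
          ContinuousLinearMap.smul_apply, smul_eq_mul, Prod.fst_sub, Prod.snd_sub]
        ring
    rw [hD] at hr
    exact HasFDerivAt.const_mul hr (F p)
  have h_bound : ∀ p : Ed d × Ed d, ∀ q ∈ Metric.ball q₀ 1,
      ‖FF' q p‖ ≤ KK * bnd d ε (‖q₀‖+1) p := by
    intro p q hq
    have hr : 0 ≤ rho d ε (p.1 - q.1) (p.2 - q.2) := rho_nonneg hε _ _
    have hle : ‖MB (p - q)‖ ≤ ‖p.1 - q.1‖ + ‖p.2 - q.2‖ + 1 := by
      have := norm_MB_le (p - q)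
      simp only [Prod.fst_sub, Prod.snd_sub] at this
      linarith
    have e2 : ‖rho d ε (p.1 - q.1) (p.2 - q.2) / ε‖
        = rho d ε (p.1 - q.1) (p.2 - q.2) / ε := by
      rw [Real.norm_eq_abs, abs_div, abs_of_nonneg hr, abs_of_pos hε]
    calc ‖FF' q p‖ = |F p| * (‖rho d ε (p.1 - q.1) (p.2 - q.2) / ε‖ * ‖MB (p - q)‖) := by
          show ‖F p • (rho d ε (p.1 - q.1) (p.2 - q.2) / ε) • MB (p - q)‖ = _
          rw [norm_smul (F p) ((rho d ε (p.1 - q.1) (p.2 - q.2) / ε) • MB (p - q)),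
            norm_smul (rho d ε (p.1 - q.1) (p.2 - q.2) / ε) (MB (p - q)), Real.norm_eq_abs]
      _ = |F p| * ((rho d ε (p.1 - q.1) (p.2 - q.2) / ε) * ‖MB (p - q)‖) := by rw [e2]
      _ ≤ |F p| * ((rho d ε (p.1 - q.1) (p.2 - q.2) / ε) *
          (‖p.1 - q.1‖ + ‖p.2 - q.2‖ + 1)) := by gcongr
      _ = |F p| * (rho d ε (p.1 - q.1) (p.2 - q.2) / ε) *
          (‖p.1 - q.1‖ + ‖p.2 - q.2‖ + 1) := by ring
      _ ≤ KK * bnd d ε (‖q₀‖+1) p := dom_vec hε hFb q₀ q hq p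
  have hF'_cont : Continuous (FF' q₀) := by
    apply hFc.smul
    exact ((cont_rho_shift ε q₀).div_const ε).smul
      (continuous_MB.comp (continuous_id.sub continuous_const))
  have hF_int : Integrable (fun p : Ed d × Ed d =>
      F p * rho d ε (p.1 - q₀.1) (p.2 - q₀.2)) := by
    apply Integrable.mono' ((integrable_bnd hε (‖q₀‖+1)).const_mul (ε * KK))
    · exact (hFc.mul (cont_rho_shift ε q₀)).aestronglyMeasurable
    · refine Eventually.of_forall fun p => ?_
      have hr : 0 ≤ rho d ε (p.1 - q₀.1) (p.2 - q₀.2) := rho_nonneg hε _ _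
      obtain ⟨hq1, hq2⟩ := norm_q_comp (Metric.mem_ball_self one_pos (x := q₀))
      have key := rho_shift_bound hε (by positivity : (0:ℝ) ≤ ‖q₀‖+1) hq1 hq2 p
      have h1 : ‖F p * rho d ε (p.1 - q₀.1) (p.2 - q₀.2)‖
          ≤ C * (rho d ε (p.1 - q₀.1) (p.2 - q₀.2) *
            (‖p.1 - q₀.1‖ + ‖p.2 - q₀.2‖ + 1)) := by
        rw [Real.norm_eq_abs, abs_mul, abs_of_nonneg hr]
        have hge : (1:ℝ) ≤ ‖p.1 - q₀.1‖ + ‖p.2 - q₀.2‖ + 1 := by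
          have := norm_nonneg (p.1 - q₀.1); have := norm_nonneg (p.2 - q₀.2); linarith
        calc |F p| * rho d ε (p.1 - q₀.1) (p.2 - q₀.2)
            ≤ C * rho d ε (p.1 - q₀.1) (p.2 - q₀.2) :=
              mul_le_mul_of_nonneg_right (hFb p) hr
          _ = C * (rho d ε (p.1 - q₀.1) (p.2 - q₀.2) * 1) := by ring
          _ ≤ C * (rho d ε (p.1 - q₀.1) (p.2 - q₀.2) *
              (‖p.1 - q₀.1‖ + ‖p.2 - q₀.2‖ + 1)) := by gcongr
      calc ‖F p * rho d ε (p.1 - q₀.1) (p.2 - q₀.2)‖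
          ≤ C * (rho d ε (p.1 - q₀.1) (p.2 - q₀.2) *
            (‖p.1 - q₀.1‖ + ‖p.2 - q₀.2‖ + 1)) := h1
        _ ≤ C * ((2*Real.pi*ε) ^ (-(d:ℝ)) * (1+2*(‖q₀‖+1)) * bnd d ε (‖q₀‖+1) p) := by
            apply mul_le_mul_of_nonneg_left key hC
        _ = ε * KK * bnd d ε (‖q₀‖+1) p := by rw [hKK]; field_simp
  have main := hasFDerivAt_integral_of_dominated_of_fderiv_le (𝕜 := ℝ)
    (μ := (volume : Measure (Ed d × Ed d))) (x₀ := q₀)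
    (F := fun q p => F p * rho d ε (p.1 - q.1) (p.2 - q.2)) (F' := FF')
    (bound := fun p => KK * bnd d ε (‖q₀‖+1) p) (s := Metric.ball q₀ 1) (Metric.ball_mem_nhds q₀ one_pos)
    (Eventually.of_forall fun q => (hFc.mul (cont_rho_shift ε q)).aestronglyMeasurable)
    hF_int hF'_cont.aestronglyMeasurable
    (Eventually.of_forall fun p q hq => h_bound p q hq)
    ((integrable_bnd hε (‖q₀‖+1)).const_mul KK)
    (Eventually.of_forall fun p q hq => h_diff p q hq)
  have hint' : Integrable (FF' q₀) := by
    apply Integrable.mono' ((integrable_bnd hε (‖q₀‖+1)).const_mul KK)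
      hF'_cont.aestronglyMeasurable
    exact Eventually.of_forall fun p => h_bound p q₀ (Metric.mem_ball_self one_pos)
  have hint1 := integrable_G1_integrand (C := C) hε hFc hFb (Metric.mem_ball_self one_pos (x := q₀))
  have hint2 := integrable_G2_integrand (C := C) hε hFc hFb (Metric.mem_ball_self one_pos (x := q₀))
  have hid : (∫ p : Ed d × Ed d, FF' q₀ p)
      = (innerSL ℝ (G1 d ε F q₀)).comp (ContinuousLinearMap.fst ℝ (Ed d) (Ed d)) +
        (innerSL ℝ (G2 d ε F q₀)).comp (ContinuousLinearMap.snd ℝ (Ed d) (Ed d)) := by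
    apply ContinuousLinearMap.ext
    intro h
    rw [ContinuousLinearMap.integral_apply hint']
    have e1 : ((innerSL ℝ (G1 d ε F q₀)).comp (ContinuousLinearMap.fst ℝ (Ed d) (Ed d)) +
        (innerSL ℝ (G2 d ε F q₀)).comp (ContinuousLinearMap.snd ℝ (Ed d) (Ed d))) h
        = ⟪G1 d ε F q₀, h.1⟫ + ⟪G2 d ε F q₀, h.2⟫ := rfl
    rw [e1]
    have e2 : ⟪G1 d ε F q₀, h.1⟫ = ∫ p : Ed d × Ed d,
        ⟪(F p * (rho d ε (p.1 - q₀.1) (p.2 - q₀.2) / ε)) • (p.1 - q₀.1), h.1⟫ := by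
      rw [real_inner_comm]
      rw [G1, ← integral_inner hint1]
      exact integral_congr_ae (Eventually.of_forall fun p => real_inner_comm _ _)
    have e3 : ⟪G2 d ε F q₀, h.2⟫ = ∫ p : Ed d × Ed d,
        ⟪(F p * (rho d ε (p.1 - q₀.1) (p.2 - q₀.2) / ε)) • (p.2 - q₀.2), h.2⟫ := by
      rw [real_inner_comm]
      rw [G2, ← integral_inner hint2]
      exact integral_congr_ae (Eventually.of_forall fun p => real_inner_comm _ _)
    rw [e2, e3, ← integral_add (hint1.inner_const h.1) (hint2.inner_const h.2)]
    apply integral_congr_ae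
    refine Eventually.of_forall fun p => ?_
    simp only [hFF', ContinuousLinearMap.smul_apply, MB_apply, smul_eq_mul,
      Prod.fst_sub, Prod.snd_sub, real_inner_smul_left]
    ring
  rw [← hid]
  exact main

theorem continuous_G1 (hε : 0 < ε) (hFc : Continuous F) (hFb : ∀ p, |F p| ≤ C) :
    Continuous (G1 d ε F) := by
  rw [continuous_iff_continuousAt]
  intro q₀
  apply continuousAt_of_dominated (bound := fun p =>
      (C * ((2*Real.pi*ε) ^ (-(d:ℝ)) * (1+2*(‖q₀‖+1))) / ε) * bnd d ε (‖q₀‖+1) p)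
  · refine Eventually.of_forall fun q => Continuous.aestronglyMeasurable ?_
    exact (hFc.mul ((cont_rho_shift ε q).div_const ε)).smul (continuous_fst.sub continuous_const)
  · filter_upwards [Metric.ball_mem_nhds q₀ one_pos] with q hq
    exact Eventually.of_forall fun p => dom1 hε hFb hq p
  · exact (integrable_bnd hε (‖q₀‖+1)).const_mul _
  · refine Eventually.of_forall fun p => Continuous.continuousAt ?_
    exact ((continuous_const.mul ((cont_rho_shift' ε p).div_const ε)).smul
      (continuous_const.sub continuous_fst))

theorem continuous_G2 (hε : 0 < ε) (hFc : Continuous F) (hFb : ∀ p, |F p| ≤ C) :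
    Continuous (G2 d ε F) := by
  rw [continuous_iff_continuousAt]
  intro q₀
  apply continuousAt_of_dominated (bound := fun p =>
      (C * ((2*Real.pi*ε) ^ (-(d:ℝ)) * (1+2*(‖q₀‖+1))) / ε) * bnd d ε (‖q₀‖+1) p)
  · refine Eventually.of_forall fun q => Continuous.aestronglyMeasurable ?_
    exact (hFc.mul ((cont_rho_shift ε q).div_const ε)).smul (continuous_snd.sub continuous_const)
  · filter_upwards [Metric.ball_mem_nhds q₀ one_pos] with q hq
    exact Eventually.of_forall fun p => dom2 hε hFb hq p
  · exact (integrable_bnd hε (‖q₀‖+1)).const_mul _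
  · refine Eventually.of_forall fun p => Continuous.continuousAt ?_
    exact ((continuous_const.mul ((cont_rho_shift' ε p).div_const ε)).smul
      (continuous_const.sub continuous_snd))

end Conv

lemma rho_neg_right (d : ℕ) (ε : ℝ) (z u : Ed d) : rho d ε z (-u) = rho d ε z u := by
  unfold rho; rw [norm_neg]

lemma le_rpow_half_left (a b : ℝ≥0∞) : a ≤ (a^2 + b^2) ^ ((1:ℝ)/2) := by
  have h : a = (a ^ (2:ℕ)) ^ ((1:ℝ)/2) := by
    rw [← ENNReal.rpow_natCast a 2]
    rw [← ENNReal.rpow_mul]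
    norm_num
  calc a = (a ^ (2:ℕ)) ^ ((1:ℝ)/2) := h
    _ ≤ (a^2 + b^2) ^ ((1:ℝ)/2) := ENNReal.rpow_le_rpow le_self_add (by norm_num)

lemma le_rpow_half_right (a b : ℝ≥0∞) : b ≤ (a^2 + b^2) ^ ((1:ℝ)/2) := by
  have h : b = (b ^ (2:ℕ)) ^ ((1:ℝ)/2) := by
    rw [← ENNReal.rpow_natCast b 2]
    rw [← ENNReal.rpow_mul]
    norm_num
  calc b = (b ^ (2:ℕ)) ^ ((1:ℝ)/2) := h
    _ ≤ (a^2 + b^2) ^ ((1:ℝ)/2) := ENNReal.rpow_le_rpow le_add_self (by norm_num)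

end MollAux


open MollAux in
/-- Example 4.2. For a bounded continuous `f : Ω × ℝ^d → ℝ`, the
mollification `f_ε` satisfies the translation formula, its gradients (in `Ω` and in `ℝ^d`)
exist and are given by integrating against `∇ρ_ε`, and the resulting gradient is uniformly
bounded and continuous w.r.t. the extended metric `d`. -/
theorem mollified_gradient
    [TopologicalSpace Ω] [MeasurableSpace Ω]
    (θ : Ed d → Ω → Ω) (Q : Measure Ω) (adm : AdmissibleFlow Ω d θ Q)
    (f : Ω × Ed d → ℝ) (hfc : Continuous f) (hfb : ∃ C, ∀ p, |f p| ≤ C)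
    (ε : ℝ) (hε : 0 < ε) :
    (∀ (r v : Ed d) (ω : Ω) (x : Ed d),
      feps θ f ε (θ r ω) (x + v)
        = ∫ zu : Ed d × Ed d, rho d ε (zu.1 - r) (zu.2 + v) * f (θ zu.1 ω, x - zu.2)) ∧
    ∃ gΩ gX : Ω × Ed d → Ed d,
      (∀ (ω : Ω) (x : Ed d), HasGradOmega θ (fun ω' => feps θ f ε ω' x) ω (gΩ (ω, x))) ∧
      (∀ (ω : Ω) (x : Ed d), HasGradientAt (fun y => feps θ f ε ω y) (gX (ω, x)) x) ∧
      (∀ (ω : Ω) (x : Ed d),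
        -gΩ (ω, x)
          = ∫ zu : Ed d × Ed d, f (θ zu.1 ω, x - zu.2) • gradient (fun z => rho d ε z zu.2) zu.1) ∧
      (∀ (ω : Ω) (x : Ed d),
        gX (ω, x)
          = ∫ zu : Ed d × Ed d, f (θ zu.1 ω, x - zu.2) • gradient (fun u => rho d ε zu.1 u) zu.2) ∧
      (∃ C, ∀ p : Ω × Ed d, ‖gΩ p‖ + ‖gX p‖ ≤ C) ∧
      ContWrtD θ gΩ ∧ ContWrtD θ gX := by
  classical
  obtain ⟨C₀, hC₀⟩ := hfb
  set C : ℝ := max C₀ 0 with hCdef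
  have hfC : ∀ p, |f p| ≤ C := fun p => le_trans (hC₀ p) (le_max_left _ _)
  have hFoc : ∀ ω : Ω, Continuous (fun p : Ed d × Ed d => f (θ p.1 ω, p.2)) := by
    intro ω
    apply hfc.comp
    exact ((adm.flow_cont.comp (continuous_const.prodMk continuous_fst)).prodMk continuous_snd)
  have hFob : ∀ (ω : Ω) (p : Ed d × Ed d), |f (θ p.1 ω, p.2)| ≤ C := fun ω p => hfC _
  -- the bridge between `feps` and the convolution `G0`
  have bridge : ∀ (ω : Ω) (w y : Ed d),
      feps θ f ε (θ w ω) y = G0 d ε (fun p : Ed d × Ed d => f (θ p.1 ω, p.2)) (w, y) := by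
    intro ω w y
    have step : ∀ p : Ed d × Ed d,
        rho d ε p.1 p.2 * f (θ p.1 (θ w ω), y - p.2)
          = (fun q : Ed d × Ed d => f (θ q.1 ω, q.2) * rho d ε (q.1 - w) (q.2 - y))
              (addRE w p.1, subLE y p.2) := by
      intro p
      simp only [addRE_apply, subLE_apply, adm.flow_comp, add_sub_cancel_right]
      have e1 : y - p.2 - y = -p.2 := by abel
      rw [e1, rho_neg_right, add_comm w p.1, mul_comm]
    calc feps θ f ε (θ w ω) y
        = ∫ p : Ed d × Ed d, (fun q : Ed d × Ed d =>
            f (θ q.1 ω, q.2) * rho d ε (q.1 - w) (q.2 - y)) (addRE w p.1, subLE y p.2) := by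
          unfold feps
          exact integral_congr_ae (Eventually.of_forall step)
      _ = ∫ q : Ed d × Ed d, f (θ q.1 ω, q.2) * rho d ε (q.1 - w) (q.2 - y) :=
          integral_comp_prod (addRE w) (subLE y) (addRE_mp w) (subLE_mp y)
            (fun q : Ed d × Ed d => f (θ q.1 ω, q.2) * rho d ε (q.1 - w) (q.2 - y))
      _ = G0 d ε (fun p : Ed d × Ed d => f (θ p.1 ω, p.2)) (w, y) := rfl
  have bridge0 : ∀ (ω : Ω) (y : Ed d),
      feps θ f ε ω y = G0 d ε (fun p : Ed d × Ed d => f (θ p.1 ω, p.2)) (0, y) := by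
    intro ω y
    have h := bridge ω 0 y
    rwa [adm.flow_zero ω] at h
  -- the representation of `G1`, `G2` at `(0,x)` by untranslated integrals
  have repO : ∀ (ω : Ω) (x : Ed d),
      G1 d ε (fun p : Ed d × Ed d => f (θ p.1 ω, p.2)) (0, x)
        = ∫ p : Ed d × Ed d, (f (θ p.1 ω, x - p.2) * (rho d ε p.1 p.2 / ε)) • p.1 := by
    intro ω x
    have step : ∀ p : Ed d × Ed d,
        (fun q : Ed d × Ed d =>
          (f (θ q.1 ω, q.2) * (rho d ε (q.1 - 0) (q.2 - x) / ε)) • (q.1 - 0))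
            (reflE d p.1, subLE x p.2)
          = (f (θ p.1 ω, x - p.2) * (rho d ε p.1 p.2 / ε)) • p.1 := by
      intro p
      simp only [reflE_apply, subLE_apply, sub_zero]
      have e1 : x - p.2 - x = -p.2 := by abel
      rw [e1, rho_neg_right]
    calc G1 d ε (fun p : Ed d × Ed d => f (θ p.1 ω, p.2)) (0, x)
        = ∫ p : Ed d × Ed d, (fun q : Ed d × Ed d =>
            (f (θ q.1 ω, q.2) * (rho d ε (q.1 - 0) (q.2 - x) / ε)) • (q.1 - 0))
              (reflE d p.1, subLE x p.2) :=
          (integral_comp_prod (reflE d) (subLE x) reflE_mp (subLE_mp x)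
            (fun q : Ed d × Ed d =>
              (f (θ q.1 ω, q.2) * (rho d ε (q.1 - 0) (q.2 - x) / ε)) • (q.1 - 0))).symm
      _ = ∫ p : Ed d × Ed d, (f (θ p.1 ω, x - p.2) * (rho d ε p.1 p.2 / ε)) • p.1 :=
          integral_congr_ae (Eventually.of_forall step)
  have repX : ∀ (ω : Ω) (x : Ed d),
      G2 d ε (fun p : Ed d × Ed d => f (θ p.1 ω, p.2)) (0, x)
        = ∫ p : Ed d × Ed d, (f (θ p.1 ω, x - p.2) * (rho d ε p.1 p.2 / ε)) • (-(p.2)) := by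
    intro ω x
    have step : ∀ p : Ed d × Ed d,
        (fun q : Ed d × Ed d =>
          (f (θ q.1 ω, q.2) * (rho d ε (q.1 - 0) (q.2 - x) / ε)) • (q.2 - x))
            (reflE d p.1, subLE x p.2)
          = (f (θ p.1 ω, x - p.2) * (rho d ε p.1 p.2 / ε)) • (-(p.2)) := by
      intro p
      simp only [reflE_apply, subLE_apply, sub_zero]
      have e1 : x - p.2 - x = -p.2 := by abel
      rw [e1, rho_neg_right]
    calc G2 d ε (fun p : Ed d × Ed d => f (θ p.1 ω, p.2)) (0, x)
        = ∫ p : Ed d × Ed d, (fun q : Ed d × Ed d =>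
            (f (θ q.1 ω, q.2) * (rho d ε (q.1 - 0) (q.2 - x) / ε)) • (q.2 - x))
              (reflE d p.1, subLE x p.2) :=
          (integral_comp_prod (reflE d) (subLE x) reflE_mp (subLE_mp x)
            (fun q : Ed d × Ed d =>
              (f (θ q.1 ω, q.2) * (rho d ε (q.1 - 0) (q.2 - x) / ε)) • (q.2 - x))).symm
      _ = ∫ p : Ed d × Ed d, (f (θ p.1 ω, x - p.2) * (rho d ε p.1 p.2 / ε)) • (-(p.2)) :=
          integral_congr_ae (Eventually.of_forall step)
  -- equivariance bridges
  have bridgeO : ∀ (ω : Ω) (z y : Ed d),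
      G1 d ε (fun p : Ed d × Ed d => f (θ p.1 (θ z ω), p.2)) (0, y)
        = G1 d ε (fun p : Ed d × Ed d => f (θ p.1 ω, p.2)) (z, y) := by
    intro ω z y
    have step : ∀ p : Ed d × Ed d,
        (fun q : Ed d × Ed d =>
          (f (θ q.1 ω, q.2) * (rho d ε (q.1 - z) (q.2 - y) / ε)) • (q.1 - z))
            (addRE z p.1, reflE d p.2)
          = (f (θ p.1 (θ z ω), p.2) * (rho d ε (p.1 - 0) (p.2 - y) / ε)) • (p.1 - 0) := by
      intro p
      simp only [addRE_apply, reflE_apply, add_sub_cancel_right, sub_zero, adm.flow_comp]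
      rw [add_comm z p.1]
    calc G1 d ε (fun p : Ed d × Ed d => f (θ p.1 (θ z ω), p.2)) (0, y)
        = ∫ p : Ed d × Ed d, (fun q : Ed d × Ed d =>
            (f (θ q.1 ω, q.2) * (rho d ε (q.1 - z) (q.2 - y) / ε)) • (q.1 - z))
              (addRE z p.1, reflE d p.2) :=
          integral_congr_ae (Eventually.of_forall fun p => (step p).symm)
      _ = G1 d ε (fun p : Ed d × Ed d => f (θ p.1 ω, p.2)) (z, y) :=
          integral_comp_prod (addRE z) (reflE d) (addRE_mp z) reflE_mp
            (fun q : Ed d × Ed d =>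
              (f (θ q.1 ω, q.2) * (rho d ε (q.1 - z) (q.2 - y) / ε)) • (q.1 - z))
  have bridgeX : ∀ (ω : Ω) (z y : Ed d),
      G2 d ε (fun p : Ed d × Ed d => f (θ p.1 (θ z ω), p.2)) (0, y)
        = G2 d ε (fun p : Ed d × Ed d => f (θ p.1 ω, p.2)) (z, y) := by
    intro ω z y
    have step : ∀ p : Ed d × Ed d,
        (fun q : Ed d × Ed d =>
          (f (θ q.1 ω, q.2) * (rho d ε (q.1 - z) (q.2 - y) / ε)) • (q.2 - y))
            (addRE z p.1, reflE d p.2)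
          = (f (θ p.1 (θ z ω), p.2) * (rho d ε (p.1 - 0) (p.2 - y) / ε)) • (p.2 - y) := by
      intro p
      simp only [addRE_apply, reflE_apply, add_sub_cancel_right, sub_zero, adm.flow_comp]
      rw [add_comm z p.1]
    calc G2 d ε (fun p : Ed d × Ed d => f (θ p.1 (θ z ω), p.2)) (0, y)
        = ∫ p : Ed d × Ed d, (fun q : Ed d × Ed d =>
            (f (θ q.1 ω, q.2) * (rho d ε (q.1 - z) (q.2 - y) / ε)) • (q.2 - y))
              (addRE z p.1, reflE d p.2) :=
          integral_congr_ae (Eventually.of_forall fun p => (step p).symm)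
      _ = G2 d ε (fun p : Ed d × Ed d => f (θ p.1 ω, p.2)) (z, y) :=
          integral_comp_prod (addRE z) (reflE d) (addRE_mp z) reflE_mp
            (fun q : Ed d × Ed d =>
              (f (θ q.1 ω, q.2) * (rho d ε (q.1 - z) (q.2 - y) / ε)) • (q.2 - y))
  refine ⟨?_, fun pr : Ω × Ed d => G1 d ε (fun p : Ed d × Ed d => f (θ p.1 pr.1, p.2)) (0, pr.2),
    fun pr : Ω × Ed d => G2 d ε (fun p : Ed d × Ed d => f (θ p.1 pr.1, p.2)) (0, pr.2),
    ?_, ?_, ?_, ?_, ?_, ?_, ?_⟩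
  · -- translation formula
    intro r v ω x
    have step : ∀ p : Ed d × Ed d,
        rho d ε p.1 p.2 * f (θ p.1 (θ r ω), x + v - p.2)
          = (fun q : Ed d × Ed d => rho d ε (q.1 - r) (q.2 + v) * f (θ q.1 ω, x - q.2))
              (addRE r p.1, addRE (-v) p.2) := by
      intro p
      simp only [addRE_apply, add_sub_cancel_right, neg_add_cancel_right, adm.flow_comp]
      have e1 : x - (p.2 + -v) = x + v - p.2 := by abel
      rw [e1, add_comm r p.1]
    calc feps θ f ε (θ r ω) (x + v)
        = ∫ p : Ed d × Ed d, (fun q : Ed d × Ed d =>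
            rho d ε (q.1 - r) (q.2 + v) * f (θ q.1 ω, x - q.2)) (addRE r p.1, addRE (-v) p.2) := by
          unfold feps
          exact integral_congr_ae (Eventually.of_forall step)
      _ = ∫ zu : Ed d × Ed d, rho d ε (zu.1 - r) (zu.2 + v) * f (θ zu.1 ω, x - zu.2) :=
          integral_comp_prod (addRE r) (addRE (-v)) (addRE_mp r) (addRE_mp (-v))
            (fun q : Ed d × Ed d => rho d ε (q.1 - r) (q.2 + v) * f (θ q.1 ω, x - q.2))
  · -- HasGradOmega
    intro ω x c v hc0 hder
    have hfd := hasFDerivAt_G0 (C := C) hε (hFoc ω) (hFob ω) ((0 : Ed d), x)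
    have hfd' : HasFDerivAt (G0 d ε (fun p : Ed d × Ed d => f (θ p.1 ω, p.2)))
        ((innerSL ℝ (G1 d ε (fun p : Ed d × Ed d => f (θ p.1 ω, p.2)) (0, x))).comp
            (ContinuousLinearMap.fst ℝ (Ed d) (Ed d)) +
          (innerSL ℝ (G2 d ε (fun p : Ed d × Ed d => f (θ p.1 ω, p.2)) (0, x))).comp
            (ContinuousLinearMap.snd ℝ (Ed d) (Ed d))) ((c 0 : Ed d), x) := by
      rw [hc0]; exact hfd
    have hcurve : HasDerivAt (fun t => ((c t, x) : Ed d × Ed d)) ((v, (0 : Ed d))) 0 :=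
      hder.prodMk (hasDerivAt_const 0 x)
    have hcomp := hfd'.comp_hasDerivAt 0 hcurve
    have heval : ((innerSL ℝ (G1 d ε (fun p : Ed d × Ed d => f (θ p.1 ω, p.2)) (0, x))).comp
            (ContinuousLinearMap.fst ℝ (Ed d) (Ed d)) +
          (innerSL ℝ (G2 d ε (fun p : Ed d × Ed d => f (θ p.1 ω, p.2)) (0, x))).comp
            (ContinuousLinearMap.snd ℝ (Ed d) (Ed d))) ((v, (0 : Ed d)) : Ed d × Ed d)
        = ⟪v, G1 d ε (fun p : Ed d × Ed d => f (θ p.1 ω, p.2)) (0, x)⟫ := by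
      simp only [ContinuousLinearMap.add_apply, ContinuousLinearMap.coe_comp',
        Function.comp_apply, ContinuousLinearMap.coe_fst', ContinuousLinearMap.coe_snd',
        innerSL_apply_apply, inner_zero_right, add_zero]
      exact real_inner_comm _ _
    have hfun : (fun t => feps θ f ε (θ (c t) ω) x)
        = fun t => G0 d ε (fun p : Ed d × Ed d => f (θ p.1 ω, p.2)) (c t, x) :=
      funext fun t => bridge ω (c t) x
    rw [hfun]
    exact heval ▸ hcomp
  · -- HasGradientAt
    intro ω x
    have hfd := hasFDerivAt_G0 (C := C) hε (hFoc ω) (hFob ω) ((0 : Ed d), x)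
    have hcurve : HasFDerivAt (fun y : Ed d => (((0 : Ed d), y) : Ed d × Ed d))
        ((0 : Ed d →L[ℝ] Ed d).prod (ContinuousLinearMap.id ℝ (Ed d))) x :=
      (hasFDerivAt_const ((0 : Ed d)) x).prodMk (hasFDerivAt_id x)
    have hcomp := hfd.comp x hcurve
    have hD : (((innerSL ℝ (G1 d ε (fun p : Ed d × Ed d => f (θ p.1 ω, p.2)) (0, x))).comp
            (ContinuousLinearMap.fst ℝ (Ed d) (Ed d)) +
          (innerSL ℝ (G2 d ε (fun p : Ed d × Ed d => f (θ p.1 ω, p.2)) (0, x))).comp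
            (ContinuousLinearMap.snd ℝ (Ed d) (Ed d))).comp
          ((0 : Ed d →L[ℝ] Ed d).prod (ContinuousLinearMap.id ℝ (Ed d))))
        = InnerProductSpace.toDual ℝ (Ed d)
            (G2 d ε (fun p : Ed d × Ed d => f (θ p.1 ω, p.2)) (0, x)) := by
      apply ContinuousLinearMap.ext
      intro w
      simp only [ContinuousLinearMap.coe_comp', Function.comp_apply,
        ContinuousLinearMap.prod_apply, ContinuousLinearMap.zero_apply,
        ContinuousLinearMap.coe_id', id_eq, ContinuousLinearMap.add_apply,
        ContinuousLinearMap.coe_fst', ContinuousLinearMap.coe_snd', innerSL_apply_apply,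
        inner_zero_right, zero_add, InnerProductSpace.toDual_apply_apply]
    have hfun : (fun y => feps θ f ε ω y)
        = fun y => G0 d ε (fun p : Ed d × Ed d => f (θ p.1 ω, p.2)) (0, y) :=
      funext fun y => bridge0 ω y
    rw [hfun]
    exact hasGradientAt_iff_hasFDerivAt.mpr (hD ▸ hcomp)
  · -- formula for gΩ
    intro ω x
    simp only [gradient_rho_left hε]
    rw [repO ω x, ← integral_neg]
    apply integral_congr_ae
    refine Eventually.of_forall fun p => ?_
    have e : -((f (θ p.1 ω, x - p.2) * (rho d ε p.1 p.2 / ε)) • p.1)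
        = f (θ p.1 ω, x - p.2) • ((-rho d ε p.1 p.2 / ε) • p.1) := by
      rw [smul_smul, ← neg_smul]
      congr 1
      ring
    exact e
  · -- formula for gX
    intro ω x
    simp only [gradient_rho_right hε]
    rw [repX ω x]
    apply integral_congr_ae
    refine Eventually.of_forall fun p => ?_
    have e : (f (θ p.1 ω, x - p.2) * (rho d ε p.1 p.2 / ε)) • (-(p.2))
        = f (θ p.1 ω, x - p.2) • ((-rho d ε p.1 p.2 / ε) • p.2) := by
      rw [smul_smul, smul_neg, ← neg_smul]
      congr 1
      ring
    exact e
  · -- uniform bound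
    refine ⟨(∫ p : Ed d × Ed d,
        (C * ((2*Real.pi*ε) ^ (-(d:ℝ)) * (1+2*(‖((0,0) : Ed d × Ed d)‖+1))) / ε) *
          bnd d ε (‖((0,0) : Ed d × Ed d)‖+1) p) * 2, fun pr => ?_⟩
    obtain ⟨ω, x⟩ := pr
    have hint : Integrable (fun p : Ed d × Ed d =>
        (C * ((2*Real.pi*ε) ^ (-(d:ℝ)) * (1+2*(‖((0,0) : Ed d × Ed d)‖+1))) / ε) *
          bnd d ε (‖((0,0) : Ed d × Ed d)‖+1) p) :=
      (integrable_bnd hε _).const_mul _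
    have hFxc : Continuous (fun p : Ed d × Ed d => f (θ p.1 ω, x - p.2)) := by
      apply hfc.comp
      exact ((adm.flow_cont.comp (continuous_const.prodMk continuous_fst)).prodMk
        (continuous_const.sub continuous_snd))
    have hFxb : ∀ p : Ed d × Ed d, |f (θ p.1 ω, x - p.2)| ≤ C := fun p => hfC _
    have hb1 : ‖G1 d ε (fun p : Ed d × Ed d => f (θ p.1 ω, p.2)) (0, x)‖
        ≤ ∫ p : Ed d × Ed d,
          (C * ((2*Real.pi*ε) ^ (-(d:ℝ)) * (1+2*(‖((0,0) : Ed d × Ed d)‖+1))) / ε) *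
            bnd d ε (‖((0,0) : Ed d × Ed d)‖+1) p := by
      rw [repO ω x]
      apply norm_integral_le_of_norm_le hint
      refine Eventually.of_forall fun p => ?_
      have h := dom1 (F := fun p : Ed d × Ed d => f (θ p.1 ω, x - p.2)) hε hFxb
        (Metric.mem_ball_self one_pos (x := ((0,0) : Ed d × Ed d))) p
      simpa using h
    have hb2 : ‖G2 d ε (fun p : Ed d × Ed d => f (θ p.1 ω, p.2)) (0, x)‖
        ≤ ∫ p : Ed d × Ed d,
          (C * ((2*Real.pi*ε) ^ (-(d:ℝ)) * (1+2*(‖((0,0) : Ed d × Ed d)‖+1))) / ε) *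
            bnd d ε (‖((0,0) : Ed d × Ed d)‖+1) p := by
      rw [repX ω x]
      apply norm_integral_le_of_norm_le hint
      refine Eventually.of_forall fun p => ?_
      have h := dom2 (F := fun p : Ed d × Ed d => f (θ p.1 ω, x - p.2)) hε hFxb
        (Metric.mem_ball_self one_pos (x := ((0,0) : Ed d × Ed d))) p
      rw [smul_neg, norm_neg]
      simpa using h
    have := add_le_add hb1 hb2
    linarith
  · -- continuity of gΩ
    intro pr ε' hε'
    obtain ⟨ω, x⟩ := pr
    have hc := ((continuous_G1 (C := C) hε (hFoc ω) (hFob ω)).continuousAt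
      (x := (((0 : Ed d), x) : Ed d × Ed d)))
    rw [Metric.continuousAt_iff] at hc
    obtain ⟨δ, hδ, hball⟩ := hc ε' hε'
    refine ⟨δ, hδ, ?_⟩
    rintro ⟨ω', y⟩ hq
    have hA : ENNReal.ofReal ‖x - y‖ < ENNReal.ofReal δ :=
      lt_of_le_of_lt (le_rpow_half_left _ _) hq
    have hB : dOmega θ ω ω' < ENNReal.ofReal δ :=
      lt_of_le_of_lt (le_rpow_half_right _ _) hq
    rw [dOmega] at hB
    simp only [iInf_lt_iff] at hB
    obtain ⟨z, hz, hzlt⟩ := hB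
    have hzn : ‖z‖ < δ := (ENNReal.ofReal_lt_ofReal_iff hδ).mp hzlt
    have hxy : ‖x - y‖ < δ := (ENNReal.ofReal_lt_ofReal_iff hδ).mp hA
    subst hz
    have e : G1 d ε (fun p : Ed d × Ed d => f (θ p.1 (θ z ω), p.2)) (0, y)
        = G1 d ε (fun p : Ed d × Ed d => f (θ p.1 ω, p.2)) (z, y) := bridgeO ω z y
    show dist (G1 d ε (fun p : Ed d × Ed d => f (θ p.1 (θ z ω), p.2)) (0, y))
      (G1 d ε (fun p : Ed d × Ed d => f (θ p.1 ω, p.2)) (0, x)) < ε'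
    rw [e]
    apply hball
    rw [Prod.dist_eq]
    apply max_lt
    · rwa [dist_zero_right]
    · rw [dist_eq_norm, norm_sub_rev]
      exact hxy
  · -- continuity of gX
    intro pr ε' hε'
    obtain ⟨ω, x⟩ := pr
    have hc := ((continuous_G2 (C := C) hε (hFoc ω) (hFob ω)).continuousAt
      (x := (((0 : Ed d), x) : Ed d × Ed d)))
    rw [Metric.continuousAt_iff] at hc
    obtain ⟨δ, hδ, hball⟩ := hc ε' hε'
    refine ⟨δ, hδ, ?_⟩
    rintro ⟨ω', y⟩ hq
    have hA : ENNReal.ofReal ‖x - y‖ < ENNReal.ofReal δ :=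
      lt_of_le_of_lt (le_rpow_half_left _ _) hq
    have hB : dOmega θ ω ω' < ENNReal.ofReal δ :=
      lt_of_le_of_lt (le_rpow_half_right _ _) hq
    rw [dOmega] at hB
    simp only [iInf_lt_iff] at hB
    obtain ⟨z, hz, hzlt⟩ := hB
    have hzn : ‖z‖ < δ := (ENNReal.ofReal_lt_ofReal_iff hδ).mp hzlt
    have hxy : ‖x - y‖ < δ := (ENNReal.ofReal_lt_ofReal_iff hδ).mp hA
    subst hz
    have e : G2 d ε (fun p : Ed d × Ed d => f (θ p.1 (θ z ω), p.2)) (0, y)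
        = G2 d ε (fun p : Ed d × Ed d => f (θ p.1 ω, p.2)) (z, y) := bridgeX ω z y
    show dist (G2 d ε (fun p : Ed d × Ed d => f (θ p.1 (θ z ω), p.2)) (0, y))
      (G2 d ε (fun p : Ed d × Ed d => f (θ p.1 ω, p.2)) (0, x)) < ε'
    rw [e]
    apply hball
    rw [Prod.dist_eq]
    apply max_lt
    · rwa [dist_zero_right]
    · rw [dist_eq_norm, norm_sub_rev]
      exact hxy

end
end
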